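/- arXiv:1903.07433 — 6 statements merged into one kernel-verified Lean document; each statement's English description precedes it below -/
import Mathlib

section
/- Let ρ : ℝ³ → [0,∞) be measurable with ρ ∈ L^∞ ∩ L^{5/3}. Then for every x ∈ ℝ³, ∫ ρ(y)/|x−y|² dy ≤ C (‖ρ‖_{L^∞})^{4/9} (‖ρ‖_{L^{5/3}})^{5/9} for some universal constant C. -/
open MeasureTheory Metric
open scoped ENNReal NNReal

namespace Stmt1Aux

local notation "E" => EuclideanSpace ℝ (Fin 3)

lemma geoSum (c : ℝ) (hc : 0 ≤ c) :
    ∑' k : ℕ, ENNReal.ofReal (c * (2⁻¹)^k) = ENNReal.ofReal (2*c) := by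
  have h1 : ∀ k : ℕ, ENNReal.ofReal (c * (2⁻¹)^k) = ENNReal.ofReal c * (2⁻¹ : ℝ≥0∞)^k := by
    intro k
    rw [ENNReal.ofReal_mul hc, ENNReal.ofReal_pow (by norm_num),
      ENNReal.ofReal_inv_of_pos (by norm_num)]
    norm_num
  simp_rw [h1]
  rw [ENNReal.tsum_mul_left, ENNReal.tsum_geometric,
    show (1 - 2⁻¹ : ℝ≥0∞) = 2⁻¹ from ENNReal.one_sub_inv_two, inv_inv,
    ENNReal.ofReal_mul (by norm_num), ENNReal.ofReal_ofNat, mul_comm]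

lemma volBall (x : E) (r : ℝ) (hr : 0 ≤ r) :
    volume (ball x r) = ENNReal.ofReal (r^3) * volume (ball (0:E) 1) := by
  rw [Measure.addHaar_ball _ _ hr]
  simp

lemma enn_inv_sq_le {x y : E} {r : ℝ} (hr : 0 < r) (h : r ≤ ‖x - y‖) :
    ((‖x - y‖₊ : ℝ≥0∞)^2)⁻¹ ≤ ENNReal.ofReal ((r^2)⁻¹) := by
  rw [ENNReal.ofReal_inv_of_pos (by positivity), ENNReal.ofReal_pow hr.le]
  apply ENNReal.inv_le_inv'
  gcongr
  rw [← enorm_eq_nnnorm, ← ofReal_norm]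
  exact ENNReal.ofReal_le_ofReal h

lemma near_bound (x : E) {ε : ℝ} (hε : 0 < ε) :
    ∫⁻ y in ball x ε, ((‖x - y‖₊ : ℝ≥0∞)^2)⁻¹ ≤
      ENNReal.ofReal (8*ε) * volume (ball (0:E) 1) := by
  set V := volume (ball (0:E) 1) with hV
  set f : E → ℝ≥0∞ := fun y => ((‖x - y‖₊ : ℝ≥0∞)^2)⁻¹ with hf
  set A : ℕ → Set E := fun k => ball x (ε/2^k) \ ball x (ε/2^(k+1)) with hA
  have hsub : ball x ε ⊆ {x} ∪ ⋃ k : ℕ, A k := by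
    intro y hy
    by_cases hxy : y = x
    · exact Or.inl hxy
    · refine Or.inr (Set.mem_iUnion.2 ?_)
      have ht0 : 0 < dist y x := dist_pos.2 hxy
      have htε : dist y x < ε := mem_ball.1 hy
      have hex : ∃ k : ℕ, ε/2^(k+1) ≤ dist y x := by
        obtain ⟨k, hk⟩ := pow_unbounded_of_one_lt (ε / dist y x) (one_lt_two (α := ℝ))
        refine ⟨k, ?_⟩
        rw [div_le_iff₀ (by positivity)]
        rw [div_lt_iff₀ ht0] at hk
        calc ε ≤ 2^k * dist y x := hk.le
        _ ≤ 2^(k+1) * dist y x :=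
          mul_le_mul_of_nonneg_right (pow_le_pow_right₀ one_le_two (Nat.le_succ k)) ht0.le
        _ = dist y x * 2^(k+1) := mul_comm _ _
      refine ⟨Nat.find hex, ?_, ?_⟩
      · rw [mem_ball]
        rcases Nat.eq_zero_or_pos (Nat.find hex) with h0 | hpos
        · rw [h0]; simpa using htε
        · have hmin := Nat.find_min hex (Nat.sub_lt hpos one_pos)
          rw [not_le] at hmin
          have hrw : Nat.find hex - 1 + 1 = Nat.find hex := Nat.succ_pred_eq_of_pos hpos
          rwa [hrw] at hmin
      · rw [mem_ball, not_lt]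
        exact Nat.find_spec hex
  have hshell : ∀ k : ℕ, ∫⁻ y in A k, f y ≤ ENNReal.ofReal ((4*ε) * (2⁻¹)^k) * V := by
    intro k
    have h2k : (0:ℝ) < 2^k := by positivity
    have hr : (0:ℝ) < ε/2^(k+1) := by positivity
    have hb : ∀ y ∈ A k, f y ≤ ENNReal.ofReal (((ε/2^(k+1))^2)⁻¹) := by
      intro y hy
      refine enn_inv_sq_le hr ?_
      have h2 := hy.2
      rw [mem_ball, not_lt] at h2
      rwa [show ‖x - y‖ = dist y x by rw [dist_comm, dist_eq_norm]]
    calc ∫⁻ y in A k, f y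
        ≤ ∫⁻ _ in A k, ENNReal.ofReal (((ε/2^(k+1))^2)⁻¹) :=
          setLIntegral_mono' (measurableSet_ball.diff measurableSet_ball) hb
      _ = ENNReal.ofReal (((ε/2^(k+1))^2)⁻¹) * volume (A k) := setLIntegral_const _ _
      _ ≤ ENNReal.ofReal (((ε/2^(k+1))^2)⁻¹) * (ENNReal.ofReal ((ε/2^k)^3) * V) := by
          gcongr
          rw [← volBall x _ (by positivity)]
          exact measure_mono Set.diff_subset
      _ = ENNReal.ofReal (((ε/2^(k+1))^2)⁻¹ * (ε/2^k)^3) * V := by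
          rw [ENNReal.ofReal_mul (by positivity), mul_assoc]
      _ = ENNReal.ofReal ((4*ε) * (2⁻¹)^k) * V := by
          congr 2
          have h21 : (2:ℝ)^(k+1) = 2^k * 2 := pow_succ 2 k
          rw [inv_pow]
          field_simp
          ring
  calc ∫⁻ y in ball x ε, f y
      ≤ ∫⁻ y in {x} ∪ ⋃ k : ℕ, A k, f y := lintegral_mono_set hsub
    _ ≤ (∫⁻ y in {x}, f y) + ∫⁻ y in ⋃ k : ℕ, A k, f y := lintegral_union_le _ _ _
    _ ≤ 0 + ∑' k : ℕ, ∫⁻ y in A k, f y :=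
        add_le_add (le_of_eq (setLIntegral_measure_zero _ _ (measure_singleton x)))
          (lintegral_iUnion_le _ _)
    _ ≤ 0 + ∑' k : ℕ, ENNReal.ofReal ((4*ε) * (2⁻¹)^k) * V :=
        add_le_add le_rfl (ENNReal.tsum_le_tsum hshell)
    _ = ENNReal.ofReal (2*(4*ε)) * V := by
        rw [zero_add, ENNReal.tsum_mul_right, geoSum _ (by positivity)]
    _ = ENNReal.ofReal (8*ε) * V := by congr 2; ring

lemma far_bound (x : E) {ε : ℝ} (hε : 0 < ε) :
    ∫⁻ y in (ball x ε)ᶜ, (((‖x - y‖₊ : ℝ≥0∞)^2)⁻¹)^((5:ℝ)/2) ≤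
      ENNReal.ofReal (16/ε^2) * volume (ball (0:E) 1) := by
  set V := volume (ball (0:E) 1) with hV
  set g : E → ℝ≥0∞ := fun y => (((‖x - y‖₊ : ℝ≥0∞)^2)⁻¹)^((5:ℝ)/2) with hg
  set B : ℕ → Set E := fun k => ball x (ε*2^(k+1)) \ ball x (ε*2^k) with hB
  have hsub : (ball x ε)ᶜ ⊆ ⋃ k : ℕ, B k := by
    intro y hy
    have htε : ε ≤ dist y x := by
      have h := hy
      rw [Set.mem_compl_iff, mem_ball, not_lt] at h
      exact h
    have ht0 : 0 < dist y x := lt_of_lt_of_le hε htε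
    refine Set.mem_iUnion.2 ?_
    have hex : ∃ k : ℕ, dist y x < ε * 2^(k+1) := by
      obtain ⟨k, hk⟩ := pow_unbounded_of_one_lt (dist y x / ε) (one_lt_two (α := ℝ))
      refine ⟨k, ?_⟩
      rw [div_lt_iff₀ hε] at hk
      calc dist y x < 2^k * ε := hk
      _ ≤ 2^(k+1) * ε :=
          mul_le_mul_of_nonneg_right (pow_le_pow_right₀ one_le_two (Nat.le_succ k)) hε.le
      _ = ε * 2^(k+1) := mul_comm _ _
    refine ⟨Nat.find hex, mem_ball.2 (Nat.find_spec hex), ?_⟩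
    rw [mem_ball, not_lt]
    rcases Nat.eq_zero_or_pos (Nat.find hex) with h0 | hpos
    · rw [h0]; simpa using htε
    · have hmin := Nat.find_min hex (Nat.sub_lt hpos one_pos)
      rw [not_lt] at hmin
      have hrw : Nat.find hex - 1 + 1 = Nat.find hex := Nat.succ_pred_eq_of_pos hpos
      rwa [hrw] at hmin
  have hshell : ∀ k : ℕ, ∫⁻ y in B k, g y ≤ ENNReal.ofReal ((8/ε^2) * (2⁻¹)^k) * V := by
    intro k
    have h2k : (0:ℝ) < 2^k := by positivity
    have hr : (0:ℝ) < ε*2^k := by positivity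
    have hb : ∀ y ∈ B k, g y ≤ ENNReal.ofReal ((((ε*2^k)^2)⁻¹)^((5:ℝ)/2)) := by
      intro y hy
      have h2 := hy.2
      rw [mem_ball, not_lt] at h2
      have h3 : ε*2^k ≤ ‖x - y‖ := by
        rwa [show ‖x - y‖ = dist y x by rw [dist_comm, dist_eq_norm]]
      rw [hg, ← ENNReal.ofReal_rpow_of_pos (by positivity)]
      exact ENNReal.rpow_le_rpow (enn_inv_sq_le hr h3) (by norm_num)
    have hkey : ((((ε*2^k)^2)⁻¹ : ℝ))^((5:ℝ)/2) * (ε*2^(k+1))^3 ≤ (8/ε^2) * (2⁻¹)^k := by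
      have e1 : ((((ε*2^k)^2)⁻¹ : ℝ))^((5:ℝ)/2) = (((ε*2^k)^5)⁻¹ : ℝ) := by
        rw [← Real.rpow_natCast (ε*2^k) 2, ← Real.rpow_neg hr.le, ← Real.rpow_mul hr.le,
          show ((-(2:ℕ):ℝ)*(5/2)) = (-((5:ℕ):ℝ)) by push_cast; norm_num,
          Real.rpow_neg hr.le, Real.rpow_natCast]
      rw [e1]
      have e2 : (ε*2^(k+1)) = 2*(ε*2^k) := by rw [pow_succ]; ring
      rw [e2]
      have e3 : (((ε*2^k)^5)⁻¹ : ℝ) * (2*(ε*2^k))^3 = 8/ε^2 * (((2:ℝ)^k)^2)⁻¹ := by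
        field_simp
        ring
      rw [e3]
      have e4 : ((((2:ℝ)^k)^2)⁻¹ : ℝ) ≤ (2⁻¹)^k := by
        rw [inv_pow]
        have h0 : (1:ℝ) ≤ 2^k := one_le_pow₀ one_le_two
        have h1 : (2:ℝ)^k ≤ ((2:ℝ)^k)^2 := by nlinarith
        gcongr
      exact mul_le_mul_of_nonneg_left e4 (by positivity)
    calc ∫⁻ y in B k, g y
        ≤ ∫⁻ _ in B k, ENNReal.ofReal ((((ε*2^k)^2)⁻¹)^((5:ℝ)/2)) :=
          setLIntegral_mono' (measurableSet_ball.diff measurableSet_ball) hb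
      _ = ENNReal.ofReal ((((ε*2^k)^2)⁻¹)^((5:ℝ)/2)) * volume (B k) := setLIntegral_const _ _
      _ ≤ ENNReal.ofReal ((((ε*2^k)^2)⁻¹)^((5:ℝ)/2)) * (ENNReal.ofReal ((ε*2^(k+1))^3) * V) := by
          gcongr
          rw [← volBall x _ (by positivity)]
          exact measure_mono Set.diff_subset
      _ = ENNReal.ofReal ((((ε*2^k)^2)⁻¹)^((5:ℝ)/2) * (ε*2^(k+1))^3) * V := by
          rw [ENNReal.ofReal_mul (by positivity), mul_assoc]
      _ ≤ ENNReal.ofReal ((8/ε^2) * (2⁻¹)^k) * V :=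
          mul_le_mul_left (ENNReal.ofReal_le_ofReal hkey) V
  calc ∫⁻ y in (ball x ε)ᶜ, g y
      ≤ ∫⁻ y in ⋃ k : ℕ, B k, g y := lintegral_mono_set hsub
    _ ≤ ∑' k : ℕ, ∫⁻ y in B k, g y := lintegral_iUnion_le _ _
    _ ≤ ∑' k : ℕ, ENNReal.ofReal ((8/ε^2) * (2⁻¹)^k) * V := ENNReal.tsum_le_tsum hshell
    _ = ENNReal.ofReal (2*(8/ε^2)) * V := by
        rw [ENNReal.tsum_mul_right, geoSum _ (by positivity)]
    _ = ENNReal.ofReal (16/ε^2) * V := by congr 2; ring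

end Stmt1Aux

open Stmt1Aux in
theorem stmt1 : ∃ C : ℝ, 0 < C ∧ ∀ ρ : EuclideanSpace ℝ (Fin 3) → ℝ,
    Measurable ρ → (∀ y, 0 ≤ ρ y) → MemLp ρ ⊤ volume → MemLp ρ (5/3) volume →
    ∀ x : EuclideanSpace ℝ (Fin 3),
      (∫ y, ρ y / ‖x - y‖ ^ 2) ≤
        C * (eLpNorm ρ ⊤ volume).toReal ^ ((4:ℝ)/9) *
          (eLpNorm ρ (5/3) volume).toReal ^ ((5:ℝ)/9) := by
  classical
  set V := volume (ball (0:EuclideanSpace ℝ (Fin 3)) 1) with hVdef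
  set W : ℝ≥0∞ := ENNReal.ofReal 8 * V + ENNReal.ofReal ((16:ℝ) ^ ((2:ℝ)/5)) * V ^ ((2:ℝ)/5)
    with hWdef
  have hVtop : V ≠ ⊤ := measure_ball_lt_top.ne
  have hWtop : W ≠ ⊤ := by
    refine ENNReal.add_ne_top.2 ⟨ENNReal.mul_ne_top ENNReal.ofReal_ne_top hVtop,
      ENNReal.mul_ne_top ENNReal.ofReal_ne_top (ENNReal.rpow_ne_top_of_nonneg (by norm_num) hVtop)⟩
  refine ⟨max 1 W.toReal, lt_of_lt_of_le one_pos (le_max_left _ _), ?_⟩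
  set C := max 1 W.toReal with hC
  intro ρ hm hpos htop h53 x
  set M := (eLpNorm ρ ⊤ volume).toReal with hM
  set N := (eLpNorm ρ (5/3) volume).toReal with hN
  have hMnonneg : 0 ≤ M := ENNReal.toReal_nonneg
  have hNnonneg : 0 ≤ N := ENNReal.toReal_nonneg
  have hCpos : (0:ℝ) < C := lt_of_lt_of_le one_pos (le_max_left _ _)
  by_cases hz : ρ =ᵐ[volume] 0
  · have h0 : (fun y => ρ y / ‖x - y‖ ^ 2) =ᵐ[volume] (fun _ => (0:ℝ)) := by
      filter_upwards [hz] with y hy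
      simp [hy]
    rw [integral_congr_ae h0, integral_zero]
    positivity
  · have hp53 : ((5:ℝ≥0∞)/3) ≠ 0 := by norm_num
    have hp53top : ((5:ℝ≥0∞)/3) ≠ ⊤ := by simp [ENNReal.div_eq_top]
    have hMne : eLpNorm ρ ⊤ volume ≠ 0 := fun h =>
      hz ((eLpNorm_eq_zero_iff hm.aestronglyMeasurable (by simp)).1 h)
    have hNne : eLpNorm ρ (5/3) volume ≠ 0 := fun h =>
      hz ((eLpNorm_eq_zero_iff hm.aestronglyMeasurable hp53).1 h)
    have hMpos : 0 < M := ENNReal.toReal_pos hMne htop.2.ne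
    have hNpos : 0 < N := ENNReal.toReal_pos hNne h53.2.ne
    set ε : ℝ := (N/M) ^ ((5:ℝ)/9) with hεdef
    have hεpos : 0 < ε := Real.rpow_pos_of_pos (div_pos hNpos hMpos) _
    set P : ℝ := M ^ ((4:ℝ)/9) * N ^ ((5:ℝ)/9) with hP
    have hPpos : 0 < P := by positivity
    have hM49 : M ^ ((5:ℝ)/9) ≠ 0 := (Real.rpow_pos_of_pos hMpos _).ne'
    have hN49 : N ^ ((4:ℝ)/9) ≠ 0 := (Real.rpow_pos_of_pos hNpos _).ne'
    have hMε : M * (8 * ε) = 8 * P := by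
      have h1 : M * ε = P := by
        rw [hεdef, Real.div_rpow hNnonneg hMnonneg, hP,
          show M ^ ((4:ℝ)/9) = M ^ ((1:ℝ) - 5/9) by norm_num,
          Real.rpow_sub hMpos, Real.rpow_one]
        field_simp
      nlinarith [h1]
    have hNε : N * (16/ε^2) ^ ((2:ℝ)/5) = (16:ℝ) ^ ((2:ℝ)/5) * P := by
      have e5 : ((ε:ℝ)^2) ^ ((2:ℝ)/5) = ε ^ ((4:ℝ)/5) := by
        rw [← Real.rpow_natCast ε 2, ← Real.rpow_mul hεpos.le]
        norm_num
      have e6 : ε ^ ((4:ℝ)/5) = (N/M) ^ ((4:ℝ)/9) := by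
        rw [hεdef, ← Real.rpow_mul (div_pos hNpos hMpos).le]
        norm_num
      rw [Real.div_rpow (by norm_num) (sq_nonneg ε), e5, e6,
        Real.div_rpow hNnonneg hMnonneg, hP,
        show N ^ ((5:ℝ)/9) = N ^ ((1:ℝ) - 4/9) by norm_num,
        Real.rpow_sub hNpos, Real.rpow_one]
      field_simp
    -- measurable pieces
    set F : EuclideanSpace ℝ (Fin 3) → ℝ≥0∞ := fun y => (‖ρ y‖₊ : ℝ≥0∞) with hF
    set G : EuclideanSpace ℝ (Fin 3) → ℝ≥0∞ := fun y => ((‖x - y‖₊ : ℝ≥0∞)^2)⁻¹ with hG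
    have hFmeas : Measurable F := hm.nnnorm.coe_nnreal_ennreal
    have hGmeas : Measurable G :=
      (((measurable_const.sub measurable_id).nnnorm.coe_nnreal_ennreal.pow_const 2)).inv
    have hibm : AEStronglyMeasurable (fun y => ρ y / ‖x - y‖ ^ 2) volume := by
      apply Measurable.aestronglyMeasurable
      exact hm.div ((measurable_const.sub measurable_id).norm.pow_const 2)
    have hA : ∫ y, ρ y / ‖x - y‖ ^ 2
        = (∫⁻ y, ENNReal.ofReal (ρ y / ‖x - y‖ ^ 2)).toReal :=
      integral_eq_lintegral_of_nonneg_ae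
        (Filter.Eventually.of_forall fun y => div_nonneg (hpos y) (by positivity)) hibm
    have hB : ∫⁻ y, ENNReal.ofReal (ρ y / ‖x - y‖ ^ 2) ≤ ∫⁻ y, F y * G y := by
      apply lintegral_mono
      intro y
      show ENNReal.ofReal (ρ y / ‖x - y‖ ^ 2) ≤ F y * G y
      by_cases h : ‖x - y‖ = 0
      · simp [h]
      · have hxy : 0 < ‖x - y‖ := (norm_nonneg _).lt_of_ne (Ne.symm h)
        rw [div_eq_mul_inv, ENNReal.ofReal_mul (hpos y),
          ENNReal.ofReal_inv_of_pos (by positivity), ENNReal.ofReal_pow (norm_nonneg _),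
          ofReal_norm, enorm_eq_nnnorm, hF, hG,
          show ENNReal.ofReal (ρ y) = (‖ρ y‖₊ : ℝ≥0∞) by
            rw [← enorm_eq_nnnorm, ← ofReal_norm, Real.norm_of_nonneg (hpos y)]]
    have hFle : ∀ᵐ y ∂(volume : Measure (EuclideanSpace ℝ (Fin 3))),
        F y ≤ ENNReal.ofReal M := by
      have h1 : ∀ᵐ y ∂(volume : Measure (EuclideanSpace ℝ (Fin 3))),
          (‖ρ y‖₊ : ℝ≥0∞) ≤ eLpNorm ρ ⊤ volume := by
        rw [eLpNorm_exponent_top]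
        exact ae_le_eLpNormEssSup
      filter_upwards [h1] with y hy
      rwa [hM, ENNReal.ofReal_toReal htop.2.ne]
    have hnear : ∫⁻ y in ball x ε, F y * G y
        ≤ ENNReal.ofReal M * (ENNReal.ofReal (8*ε) * V) := by
      calc ∫⁻ y in ball x ε, F y * G y
          ≤ ∫⁻ y in ball x ε, ENNReal.ofReal M * G y := by
            apply lintegral_mono_ae
            filter_upwards [ae_restrict_of_ae hFle] with y hy
            exact mul_le_mul_left hy _
        _ = ENNReal.ofReal M * ∫⁻ y in ball x ε, G y := lintegral_const_mul _ hGmeas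
        _ ≤ _ := mul_le_mul_right (near_bound x hεpos) _
    have heqN : ENNReal.ofReal N = (∫⁻ y, F y ^ ((5:ℝ)/3)) ^ ((1:ℝ)/(5/3)) := by
      rw [hN, ENNReal.ofReal_toReal h53.2.ne,
        eLpNorm_eq_lintegral_rpow_enorm_toReal hp53 hp53top]
      norm_num
      simp only [hF, enorm_eq_nnnorm]
    have hfar : ∫⁻ y in (ball x ε)ᶜ, F y * G y
        ≤ ENNReal.ofReal N * (ENNReal.ofReal (16/ε^2) * V) ^ ((2:ℝ)/5) := by
      have hconj : ((5:ℝ)/3).HolderConjugate (5/2) := by constructor <;> norm_num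
      have hH := ENNReal.lintegral_mul_le_Lp_mul_Lq
        (volume.restrict (ball x ε)ᶜ) hconj hFmeas.aemeasurable hGmeas.aemeasurable
      have h1 : (∫⁻ y in (ball x ε)ᶜ, F y ^ ((5:ℝ)/3)) ^ ((1:ℝ)/(5/3))
          ≤ ENNReal.ofReal N := by
        rw [heqN]
        exact ENNReal.rpow_le_rpow (setLIntegral_le_lintegral _ _) (by norm_num)
      have h2 : (∫⁻ y in (ball x ε)ᶜ, G y ^ ((5:ℝ)/2)) ^ ((1:ℝ)/(5/2))
          ≤ (ENNReal.ofReal (16/ε^2) * V) ^ ((2:ℝ)/5) := by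
        rw [show ((1:ℝ)/(5/2)) = (2:ℝ)/5 by norm_num]
        exact ENNReal.rpow_le_rpow (far_bound x hεpos) (by norm_num)
      calc ∫⁻ y in (ball x ε)ᶜ, F y * G y = ∫⁻ y in (ball x ε)ᶜ, (F * G) y := rfl
        _ ≤ (∫⁻ y in (ball x ε)ᶜ, F y ^ ((5:ℝ)/3)) ^ ((1:ℝ)/(5/3))
            * (∫⁻ y in (ball x ε)ᶜ, G y ^ ((5:ℝ)/2)) ^ ((1:ℝ)/(5/2)) := hH
        _ ≤ _ := mul_le_mul' h1 h2
    have halg : ENNReal.ofReal M * (ENNReal.ofReal (8*ε) * V)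
        + ENNReal.ofReal N * (ENNReal.ofReal (16/ε^2) * V) ^ ((2:ℝ)/5)
        = ENNReal.ofReal P * W := by
      rw [ENNReal.mul_rpow_of_nonneg _ _ (by norm_num : (0:ℝ) ≤ 2/5),
        ENNReal.ofReal_rpow_of_pos (by positivity)]
      rw [← mul_assoc, ← mul_assoc, ← ENNReal.ofReal_mul hMnonneg,
        ← ENNReal.ofReal_mul hNnonneg, hMε, hNε, hWdef]
      rw [show (8:ℝ) * P = P * 8 by ring, show (16:ℝ) ^ ((2:ℝ)/5) * P = P * 16 ^ ((2:ℝ)/5) by ring,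
        ENNReal.ofReal_mul hPpos.le, ENNReal.ofReal_mul hPpos.le]
      ring
    have hWC : W ≤ ENNReal.ofReal C := by
      rw [← ENNReal.ofReal_toReal hWtop]
      exact ENNReal.ofReal_le_ofReal (le_max_right _ _)
    have htotal : ∫⁻ y, ENNReal.ofReal (ρ y / ‖x - y‖ ^ 2) ≤ ENNReal.ofReal (C * P) := by
      calc ∫⁻ y, ENNReal.ofReal (ρ y / ‖x - y‖ ^ 2) ≤ ∫⁻ y, F y * G y := hB
        _ = (∫⁻ y in ball x ε, F y * G y) + ∫⁻ y in (ball x ε)ᶜ, F y * G y :=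
            (lintegral_add_compl _ measurableSet_ball).symm
        _ ≤ ENNReal.ofReal M * (ENNReal.ofReal (8*ε) * V)
            + ENNReal.ofReal N * (ENNReal.ofReal (16/ε^2) * V) ^ ((2:ℝ)/5) :=
            add_le_add hnear hfar
        _ = ENNReal.ofReal P * W := halg
        _ ≤ ENNReal.ofReal P * ENNReal.ofReal C := mul_le_mul_right hWC _
        _ = ENNReal.ofReal (C * P) := by
            rw [← ENNReal.ofReal_mul hPpos.le, mul_comm]
    rw [hA, show C * M ^ ((4:ℝ)/9) * N ^ ((5:ℝ)/9) = C * P by rw [hP]; ring]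
    exact ENNReal.toReal_le_of_le_ofReal (by positivity) htotal
end

section
/- Let Γ : [t, t+Δ] → ℝ be C², let t₀ ∈ [t, t+Δ] be a point where |Γ| attains its minimum on [t, t+Δ], and suppose |Γ''(s)| ≤ B for all s and |Γ'(t₀)| ≥ m > 0 with B Δ ≤ m/4. Then for all s ∈ [t, t+Δ], |Γ(s)| ≥ (m/4) |s − t₀|. -/
open Set Filter Topology

theorem stmt9 (t Δ t₀ m B : ℝ) (Γ Γ' Γ'' : ℝ → ℝ)
    (hΔ : 0 ≤ Δ) (ht₀ : t₀ ∈ Set.Icc t (t + Δ))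
    (hd1 : ∀ s ∈ Set.Icc t (t + Δ), HasDerivAt Γ (Γ' s) s)
    (hd2 : ∀ s ∈ Set.Icc t (t + Δ), HasDerivAt Γ' (Γ'' s) s)
    (hmin : ∀ s ∈ Set.Icc t (t + Δ), |Γ t₀| ≤ |Γ s|)
    (hB : ∀ s ∈ Set.Icc t (t + Δ), |Γ'' s| ≤ B)
    (hm : 0 < m) (hm' : m ≤ |Γ' t₀|) (hBΔ : B * Δ ≤ m / 4) :
    ∀ s ∈ Set.Icc t (t + Δ), m / 4 * |s - t₀| ≤ |Γ s| := by
  intro s hs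
  have hI : Convex ℝ (Set.Icc t (t + Δ)) := convex_Icc _ _
  have hB0 : 0 ≤ B := le_trans (abs_nonneg _) (hB t₀ ht₀)
  -- |u - t₀| ≤ Δ for u in interval
  have hdist : ∀ u ∈ Set.Icc t (t + Δ), |u - t₀| ≤ Δ := by
    intro u hu
    rw [abs_sub_le_iff]
    constructor <;> [skip; skip] <;> linarith [hu.1, hu.2, ht₀.1, ht₀.2]
  -- Γ' Lipschitz-type bound
  have key1 : ∀ u ∈ Set.Icc t (t + Δ), |Γ' u - Γ' t₀| ≤ B * |u - t₀| := by
    intro u hu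
    have := hI.norm_image_sub_le_of_norm_hasDerivWithin_le
      (f := Γ') (f' := Γ'') (fun x hx => (hd2 x hx).hasDerivWithinAt)
      (C := B) (fun x hx => by simpa [Real.norm_eq_abs] using hB x hx) ht₀ hu
    simpa [Real.norm_eq_abs] using this
  -- remainder function
  set g : ℝ → ℝ := fun u => Γ u - Γ t₀ - Γ' t₀ * (u - t₀) with hgdef
  have hdg : ∀ u ∈ Set.Icc t (t + Δ), HasDerivWithinAt g (Γ' u - Γ' t₀) (Set.Icc t (t + Δ)) u := by
    intro u hu
    have h1 := (hd1 u hu).hasDerivWithinAt (s := Set.Icc t (t + Δ))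
    have h2 : HasDerivWithinAt (fun u => Γ t₀ + Γ' t₀ * (u - t₀)) (Γ' t₀) (Set.Icc t (t + Δ)) u := by
      have : HasDerivAt (fun u => Γ t₀ + Γ' t₀ * (u - t₀)) (Γ' t₀) u := by
        simpa using (((hasDerivAt_id u).sub_const t₀).const_mul (Γ' t₀)).const_add (Γ t₀)
      exact this.hasDerivWithinAt
    have h3 := h1.sub h2
    have hge : g = fun u => Γ u - (Γ t₀ + Γ' t₀ * (u - t₀)) := by
      ext v; simp [hgdef]; ring
    rw [hge]; exact h3
  have key2 : |g s| ≤ B * Δ * |s - t₀| := by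
    have hb : ∀ x ∈ Set.Icc t (t + Δ), ‖Γ' x - Γ' t₀‖ ≤ B * Δ := by
      intro x hx
      calc ‖Γ' x - Γ' t₀‖ ≤ B * |x - t₀| := key1 x hx
        _ ≤ B * Δ := by exact mul_le_mul_of_nonneg_left (hdist x hx) hB0
    have := hI.norm_image_sub_le_of_norm_hasDerivWithin_le hdg hb ht₀ hs
    have hgt0 : g t₀ = 0 := by simp [hgdef]
    simpa [Real.norm_eq_abs, hgt0] using this
  -- sign argument
  have hsq : ∀ u ∈ Set.Icc t (t + Δ), Γ t₀ ^ 2 ≤ Γ u ^ 2 := by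
    intro u hu
    have := hmin u hu
    nlinarith [abs_nonneg (Γ t₀), sq_abs (Γ t₀), sq_abs (Γ u)]
  set f : ℝ → ℝ := fun u => Γ u ^ 2 with hfdef
  have hdf : HasDerivAt f (2 * Γ t₀ * Γ' t₀) t₀ := by
    have := (hd1 t₀ ht₀).fun_pow 2
    simpa [hfdef, mul_comm, mul_assoc, mul_left_comm] using this
  have hsign : 0 ≤ Γ t₀ * (Γ' t₀ * (s - t₀)) := by
    rcases lt_trichotomy s t₀ with hlt | heq | hgt
    · -- s < t₀ : left derivative nonpos
      have hne : (𝓝[<] t₀).NeBot := nhdsWithin_Iio_self_neBot' ⟨s, hlt⟩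
      have htend : Tendsto (slope f t₀) (𝓝[<] t₀) (𝓝 (2 * Γ t₀ * Γ' t₀)) := by
        have := hdf.hasDerivWithinAt (s := Iio t₀)
        rw [hasDerivWithinAt_iff_tendsto_slope] at this
        refine this.mono_left (nhdsWithin_mono _ ?_)
        intro x hx; exact ⟨hx, ne_of_lt hx⟩
      have hle : 2 * Γ t₀ * Γ' t₀ ≤ 0 := by
        refine le_of_tendsto htend ?_
        filter_upwards [Ioo_mem_nhdsLT_of_mem (show t₀ ∈ Set.Ioc s t₀ from ⟨hlt, le_rfl⟩)] with u hu
        have huI : u ∈ Set.Icc t (t + Δ) := ⟨le_trans hs.1 hu.1.le, le_trans hu.2.le ht₀.2⟩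
        have := hsq u huI
        rw [slope_def_field]
        exact div_nonpos_of_nonneg_of_nonpos (by simpa [hfdef] using sub_nonneg.2 this) (by linarith [hu.2])
      nlinarith
    · simp [heq]
    · -- s > t₀ : right derivative nonneg
      have htend : Tendsto (slope f t₀) (𝓝[>] t₀) (𝓝 (2 * Γ t₀ * Γ' t₀)) := by
        have := hdf.hasDerivWithinAt (s := Ioi t₀)
        rw [hasDerivWithinAt_iff_tendsto_slope] at this
        refine this.mono_left (nhdsWithin_mono _ ?_)
        intro x hx; exact ⟨hx, ne_of_gt hx⟩
      have hne : (𝓝[>] t₀).NeBot := nhdsGT_neBot_of_exists_gt ⟨s, hgt⟩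
      have hle : 0 ≤ 2 * Γ t₀ * Γ' t₀ := by
        refine ge_of_tendsto htend ?_
        filter_upwards [Ioo_mem_nhdsGT_of_mem (show t₀ ∈ Set.Ico t₀ s from ⟨le_rfl, hgt⟩)] with u hu
        have huI : u ∈ Set.Icc t (t + Δ) := ⟨le_trans ht₀.1 hu.1.le, le_trans hu.2.le hs.2⟩
        have := hsq u huI
        rw [slope_def_field]
        apply div_nonneg (by simpa [hfdef] using sub_nonneg.2 this) (by linarith [hu.1])
      nlinarith
  -- combine
  have habs : m * |s - t₀| ≤ |Γ t₀ + Γ' t₀ * (s - t₀)| := by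
    have h1 : |Γ' t₀ * (s - t₀)| ≤ |Γ t₀ + Γ' t₀ * (s - t₀)| := by
      rcases abs_cases (Γ' t₀ * (s - t₀)) with ⟨h, _⟩ | ⟨h, _⟩ <;>
      rcases abs_cases (Γ t₀ + Γ' t₀ * (s - t₀)) with ⟨h2, _⟩ | ⟨h2, _⟩ <;>
      rcases abs_cases (Γ t₀) with ⟨h3, _⟩ | ⟨h3, _⟩ <;> nlinarith
    calc m * |s - t₀| ≤ |Γ' t₀| * |s - t₀| := mul_le_mul_of_nonneg_right hm' (abs_nonneg _)
      _ = |Γ' t₀ * (s - t₀)| := (abs_mul _ _).symm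
      _ ≤ _ := h1
  have h4 : |Γ t₀ + Γ' t₀ * (s - t₀)| ≤ |Γ s| + |g s| := by
    have heq : Γ t₀ + Γ' t₀ * (s - t₀) = Γ s - g s := by simp [hgdef]; ring
    rw [heq]; exact abs_sub _ _
  have h5 : B * Δ * |s - t₀| ≤ m / 4 * |s - t₀| :=
    mul_le_mul_of_nonneg_right hBΔ (abs_nonneg _)
  nlinarith [abs_nonneg (s - t₀), hm.le, habs, key2, h4, h5]
end

section
/- Let l > 0, V, η, h > 0, and let X, Y : [t, t+Δ] → ℝ³ be such that |X(s)−Y(s)| ≥ (h V^{−η}/4)|s−t₀| for some t₀ ∈ [t, t+Δ] and all s. Then ∫_t^{t+Δ} χ(|X(s)−Y(s)| > l) / |X(s)−Y(s)|² ds ≤ C V^{η} / (l h), with a universal constant C. -/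
open MeasureTheory Set Filter Topology

lemma helper10 (k d a : ℝ) (hk : 0 < k) (ha : 0 < a) :
    IntegrableOn (fun s => k * ((s - d) ^ 2)⁻¹) (Set.Ioi (d + a)) ∧
      (∫ s in Set.Ioi (d + a), k * ((s - d) ^ 2)⁻¹) = k * a⁻¹ := by
  set g : ℝ → ℝ := fun x => -(k * (x - d)⁻¹) with hg
  have hderiv : ∀ x ∈ Ici (d + a), HasDerivAt g (k * ((x - d) ^ 2)⁻¹) x := by
    intro x hx
    simp only [mem_Ici] at hx
    have hxd : 0 < x - d := by linarith
    have h1 : HasDerivAt (fun y : ℝ => y - d) 1 x := (hasDerivAt_id x).sub_const d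
    have h2 := (h1.inv hxd.ne').const_mul k
    have h3 := h2.neg
    exact h3.congr_deriv (by ring)
  have hpos : ∀ x ∈ Ioi (d + a), 0 ≤ k * ((x - d) ^ 2)⁻¹ := by
    intro x _; positivity
  have htend : Tendsto g atTop (𝓝 0) := by
    have h5 : Tendsto (fun x : ℝ => x - d) atTop atTop := by
      simpa [sub_eq_add_neg] using tendsto_atTop_add_const_right atTop (-d) tendsto_id
    have h6 : Tendsto (fun x : ℝ => (x - d)⁻¹) atTop (𝓝 0) :=
      tendsto_inv_atTop_zero.comp h5
    have h7 := (h6.const_mul k).neg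
    simpa using h7
  refine ⟨integrableOn_Ioi_deriv_of_nonneg' hderiv hpos htend, ?_⟩
  rw [integral_Ioi_of_hasDerivAt_of_nonneg' hderiv hpos htend]
  simp only [hg, add_sub_cancel_left]
  ring

theorem stmt10 : ∃ C : ℝ, 0 < C ∧
    ∀ (X Y : ℝ → EuclideanSpace ℝ (Fin 3)) (t Δ t₀ l V η h : ℝ),
    0 < l → 0 < V → 0 < η → 0 < h → 0 ≤ Δ → t₀ ∈ Set.Icc t (t + Δ) →
    (∀ s ∈ Set.Icc t (t + Δ), h * V ^ (-η) / 4 * |s - t₀| ≤ ‖X s - Y s‖) →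
    (∫ s in Set.Icc t (t + Δ),
        Set.indicator {s : ℝ | l < ‖X s - Y s‖} (fun s => (‖X s - Y s‖ ^ 2)⁻¹) s) ≤
      C * V ^ η / (l * h) := by
  refine ⟨16, by norm_num, ?_⟩
  intro X Y t Δ t₀ l V η h hl hV hη hh hΔ ht₀ hXY
  have hVη : (0:ℝ) < V ^ η := Real.rpow_pos_of_pos hV η
  have hVnη : V ^ (-η) = (V ^ η)⁻¹ := Real.rpow_neg hV.le η
  set c : ℝ := h * V ^ (-η) / 4 with hc_def
  have hc : 0 < c := by
    have : (0:ℝ) < V ^ (-η) := Real.rpow_pos_of_pos hV (-η)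
    positivity
  set a : ℝ := l / c with ha_def
  have ha : 0 < a := div_pos hl hc
  have hk : (0:ℝ) < (c ^ 2)⁻¹ := by positivity
  set φ : ℝ → ℝ := fun s => (c ^ 2)⁻¹ * ((s - t₀) ^ 2)⁻¹ with hφ
  set G : ℝ → ℝ := fun s =>
    Set.indicator (Set.Icc (t₀ - a) (t₀ + a)) (fun _ => (l ^ 2)⁻¹) s
      + Set.indicator (Set.Ioi (t₀ + a)) φ s
      + Set.indicator (Set.Iic (t₀ - a)) φ s with hG
  -- integrability of pieces
  have key := helper10 ((c ^ 2)⁻¹) t₀ a hk ha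
  have keyneg := helper10 ((c ^ 2)⁻¹) (-t₀) a hk ha
  have hG1 : Integrable (Set.indicator (Set.Icc (t₀ - a) (t₀ + a))
      (fun _ : ℝ => (l ^ 2)⁻¹)) := by
    rw [integrable_indicator_iff measurableSet_Icc]
    exact integrableOn_const measure_Icc_lt_top.ne
  have hG2 : Integrable (Set.indicator (Set.Ioi (t₀ + a)) φ) := by
    rw [integrable_indicator_iff measurableSet_Ioi]
    exact key.1
  have hIic : IntegrableOn φ (Set.Iic (t₀ - a)) := by
    apply (MeasurePreserving.integrableOn_comp_preimage
      (Measure.measurePreserving_neg (volume : Measure ℝ))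
      (Homeomorph.neg ℝ).measurableEmbedding).1
    have hpre : (Neg.neg ⁻¹' Set.Iic (t₀ - a) : Set ℝ) = Set.Ici (-(t₀ - a)) := by
      ext x; simp [neg_le]
    have hfun : (φ ∘ Neg.neg : ℝ → ℝ) = fun x => (c ^ 2)⁻¹ * ((x - (-t₀)) ^ 2)⁻¹ := by
      funext x
      simp only [Function.comp, hφ]
      congr 1
      ring
    rw [hpre, hfun, integrableOn_Ici_iff_integrableOn_Ioi,
      show -(t₀ - a) = -t₀ + a by ring]
    exact keyneg.1
  have hG3 : Integrable (Set.indicator (Set.Iic (t₀ - a)) φ) := by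
    rw [integrable_indicator_iff measurableSet_Iic]
    exact hIic
  have hGint : Integrable G := (hG1.add hG2).add hG3
  -- nonnegativity of G
  have hφ_nonneg : ∀ s, 0 ≤ φ s := fun s => by positivity
  have hG_nonneg : ∀ s, 0 ≤ G s := by
    intro s
    have n1 : 0 ≤ Set.indicator (Set.Icc (t₀ - a) (t₀ + a)) (fun _ : ℝ => (l ^ 2)⁻¹) s :=
      Set.indicator_nonneg (fun _ _ => by positivity) s
    have n2 : 0 ≤ Set.indicator (Set.Ioi (t₀ + a)) φ s :=
      Set.indicator_nonneg (fun x _ => hφ_nonneg x) s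
    have n3 : 0 ≤ Set.indicator (Set.Iic (t₀ - a)) φ s :=
      Set.indicator_nonneg (fun x _ => hφ_nonneg x) s
    simp only [hG]
    linarith
  -- pointwise bound
  have hfG : ∀ s ∈ Set.Icc t (t + Δ), s ≠ t₀ →
      Set.indicator {s : ℝ | l < ‖X s - Y s‖} (fun s => (‖X s - Y s‖ ^ 2)⁻¹) s ≤ G s := by
    intro s hs hne
    by_cases hmem : s ∈ {s : ℝ | l < ‖X s - Y s‖}
    · rw [Set.indicator_of_mem hmem]
      have hln : l < ‖X s - Y s‖ := hmem
      have n1 : 0 ≤ Set.indicator (Set.Icc (t₀ - a) (t₀ + a)) (fun _ : ℝ => (l ^ 2)⁻¹) s :=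
        Set.indicator_nonneg (fun _ _ => by positivity) s
      have n2 : 0 ≤ Set.indicator (Set.Ioi (t₀ + a)) φ s :=
        Set.indicator_nonneg (fun x _ => hφ_nonneg x) s
      have n3 : 0 ≤ Set.indicator (Set.Iic (t₀ - a)) φ s :=
        Set.indicator_nonneg (fun x _ => hφ_nonneg x) s
      rcases le_or_gt |s - t₀| a with hcase | hcase
      · have hsIcc : s ∈ Set.Icc (t₀ - a) (t₀ + a) := by
          rw [Set.mem_Icc]
          have := abs_le.1 hcase
          constructor <;> linarith [this.1, this.2]
        have hb : (‖X s - Y s‖ ^ 2)⁻¹ ≤ (l ^ 2)⁻¹ := by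
          apply inv_anti₀ (by positivity)
          nlinarith
        calc (‖X s - Y s‖ ^ 2)⁻¹ ≤ (l ^ 2)⁻¹ := hb
          _ ≤ G s := by
            simp only [hG, Set.indicator_of_mem hsIcc]
            linarith
      · have hcn : c * |s - t₀| ≤ ‖X s - Y s‖ := hXY s hs
        have habs : 0 < |s - t₀| := lt_trans ha hcase
        have hb : (‖X s - Y s‖ ^ 2)⁻¹ ≤ φ s := by
          have h1 : c ^ 2 * (s - t₀) ^ 2 ≤ ‖X s - Y s‖ ^ 2 := by
            have h2 : (c * |s - t₀|) ^ 2 ≤ ‖X s - Y s‖ ^ 2 := by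
              apply sq_le_sq' <;> nlinarith [abs_nonneg (s - t₀), norm_nonneg (X s - Y s)]
            calc c ^ 2 * (s - t₀) ^ 2 = (c * |s - t₀|) ^ 2 := by
                  rw [mul_pow, sq_abs]
              _ ≤ _ := h2
          have h3 : (0:ℝ) < c ^ 2 * (s - t₀) ^ 2 := by
            have h4 : (0:ℝ) < (s - t₀) ^ 2 := by rw [← sq_abs]; exact pow_pos habs 2
            positivity
          have := inv_anti₀ h3 h1
          calc (‖X s - Y s‖ ^ 2)⁻¹ ≤ (c ^ 2 * (s - t₀) ^ 2)⁻¹ := this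
            _ = φ s := by rw [hφ, mul_inv]
        rcases lt_or_ge t₀ s with hst | hst
        · have hsIoi : s ∈ Set.Ioi (t₀ + a) := by
            rw [Set.mem_Ioi]
            have : |s - t₀| = s - t₀ := abs_of_pos (by linarith)
            linarith [this ▸ hcase]
          calc (‖X s - Y s‖ ^ 2)⁻¹ ≤ φ s := hb
            _ ≤ G s := by
              simp only [hG, Set.indicator_of_mem hsIoi]
              linarith
        · have hsIic : s ∈ Set.Iic (t₀ - a) := by
            rw [Set.mem_Iic]
            have : |s - t₀| = -(s - t₀) := abs_of_neg (by
              rcases lt_or_eq_of_le hst with h' | h'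
              · linarith
              · exact absurd h' hne)
            have := this ▸ hcase
            linarith
          calc (‖X s - Y s‖ ^ 2)⁻¹ ≤ φ s := hb
            _ ≤ G s := by
              simp only [hG, Set.indicator_of_mem hsIic]
              linarith
    · rw [Set.indicator_of_notMem hmem]
      exact hG_nonneg s
  -- value of the integral of G
  have hIicval : (∫ s in Set.Iic (t₀ - a), φ s) = (c ^ 2)⁻¹ * a⁻¹ := by
    have hφF : φ = fun x => (fun y : ℝ => (c ^ 2)⁻¹ * ((y - (-t₀)) ^ 2)⁻¹) (-x) := by
      funext x
      simp only [hφ]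
      congr 1
      ring
    rw [hφF, integral_comp_neg_Iic, show -(t₀ - a) = -t₀ + a by ring]
    exact keyneg.2
  have hGval : (∫ s, G s) = 16 * V ^ η / (l * h) := by
    have h12 : Integrable (fun s => Set.indicator (Set.Icc (t₀ - a) (t₀ + a))
        (fun _ : ℝ => (l ^ 2)⁻¹) s + Set.indicator (Set.Ioi (t₀ + a)) φ s) := hG1.add hG2
    simp only [hG]
    rw [integral_add h12 hG3, integral_add hG1 hG2,
      integral_indicator measurableSet_Icc, integral_indicator measurableSet_Ioi,
      integral_indicator measurableSet_Iic, hIicval, key.2,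
      setIntegral_const, measureReal_def, Real.volume_Icc,
      show t₀ + a - (t₀ - a) = 2 * a by ring,
      ENNReal.toReal_ofReal (by linarith : (0:ℝ) ≤ 2 * a), smul_eq_mul]
    rw [ha_def, hc_def, hVnη]
    field_simp
    ring
  -- final chain
  calc (∫ s in Set.Icc t (t + Δ),
        Set.indicator {s : ℝ | l < ‖X s - Y s‖} (fun s => (‖X s - Y s‖ ^ 2)⁻¹) s)
      ≤ ∫ s in Set.Icc t (t + Δ), G s := by
        apply integral_mono_of_nonneg
        · exact Eventually.of_forall fun s =>
            Set.indicator_nonneg (fun x _ => by positivity) s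
        · exact hGint.restrict
        · have h1 : ∀ᵐ s ∂(volume.restrict (Set.Icc t (t + Δ))), s ∈ Set.Icc t (t + Δ) :=
            ae_restrict_mem measurableSet_Icc
          have h2 : ∀ᵐ s ∂(volume.restrict (Set.Icc t (t + Δ))), s ≠ t₀ := by
            apply ae_restrict_of_ae
            have : (volume : Measure ℝ) {t₀} = 0 := measure_singleton t₀
            rw [ae_iff]
            convert this using 2
            ext x
            simp
          filter_upwards [h1, h2] with s hs hne using hfG s hs hne
    _ ≤ ∫ s, G s := setIntegral_le_integral hGint (Eventually.of_forall hG_nonneg)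
    _ = 16 * V ^ η / (l * h) := hGval
end

section
/- Let V : [0,T] → ℝ³ satisfy |V(t)|² = |v|² + 2∫₀ᵗ V(s)·G(s) ds, with ∫₀ᵗ |G(s)| ds ≤ M for all t ∈ [0,T]. Set Ṽ(t) = sup_{0≤s≤t} |V(s)|. Then for all t, |v|² ≥ |V(t)|² − 2 M Ṽ(t), and if Ṽ(t) > 4M then |v|² ≥ Ṽ(t)²/2 ≥ |V(t)|²/2. -/
open MeasureTheory RealInnerProductSpace

noncomputable def runSup (V : ℝ → EuclideanSpace ℝ (Fin 3)) (t : ℝ) : ℝ :=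
  sSup ((fun s => ‖V s‖) '' Set.Icc 0 t)

lemma runSup_bdd (V : ℝ → EuclideanSpace ℝ (Fin 3)) (hVc : Continuous V) (t : ℝ) :
    BddAbove ((fun s => ‖V s‖) '' Set.Icc 0 t) :=
  (isCompact_Icc.image (hVc.norm)).bddAbove

lemma le_runSup (V : ℝ → EuclideanSpace ℝ (Fin 3)) (hVc : Continuous V) {s t : ℝ}
    (hs : s ∈ Set.Icc 0 t) : ‖V s‖ ≤ runSup V t :=
  le_csSup (runSup_bdd V hVc t) ⟨s, hs, rfl⟩

lemma runSup_nonneg (V : ℝ → EuclideanSpace ℝ (Fin 3)) (hVc : Continuous V) {t : ℝ}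
    (ht : 0 ≤ t) : 0 ≤ runSup V t :=
  (norm_nonneg _).trans (le_runSup V hVc ⟨le_rfl, ht⟩)

lemma runSup_mono (V : ℝ → EuclideanSpace ℝ (Fin 3)) (hVc : Continuous V) {s t : ℝ}
    (hs : 0 ≤ s) (hst : s ≤ t) : runSup V s ≤ runSup V t :=
  csSup_le_csSup (runSup_bdd V hVc t) ⟨‖V 0‖, 0, ⟨le_rfl, hs⟩, rfl⟩
    (Set.image_mono (Set.Icc_subset_Icc le_rfl hst))

theorem stmt12 (T M : ℝ) (hT : 0 ≤ T) (hM : 0 ≤ M)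
    (v : EuclideanSpace ℝ (Fin 3)) (V G : ℝ → EuclideanSpace ℝ (Fin 3))
    (hVc : Continuous V) (hGc : Continuous G)
    (hEq : ∀ t ∈ Set.Icc (0:ℝ) T,
      ‖V t‖ ^ 2 = ‖v‖ ^ 2 + 2 * ∫ s in (0:ℝ)..t, ⟪V s, G s⟫)
    (hG : ∀ t ∈ Set.Icc (0:ℝ) T, (∫ s in (0:ℝ)..t, ‖G s‖) ≤ M) :
    ∀ t ∈ Set.Icc (0:ℝ) T,
      ‖v‖ ^ 2 ≥ ‖V t‖ ^ 2 - 2 * M * runSup V t ∧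
      (runSup V t > 4 * M →
        ‖v‖ ^ 2 ≥ runSup V t ^ 2 / 2 ∧ runSup V t ^ 2 / 2 ≥ ‖V t‖ ^ 2 / 2) := by
  -- main estimate
  have key : ∀ t ∈ Set.Icc (0:ℝ) T, ‖v‖ ^ 2 ≥ ‖V t‖ ^ 2 - 2 * M * runSup V t := by
    intro t ht
    obtain ⟨ht0, htT⟩ := ht
    have hR0 : 0 ≤ runSup V t := runSup_nonneg V hVc ht0
    have hint : (∫ s in (0:ℝ)..t, ⟪V s, G s⟫) ≤ M * runSup V t := by
      have h1 : (∫ s in (0:ℝ)..t, ⟪V s, G s⟫) ≤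
          ∫ s in (0:ℝ)..t, runSup V t * ‖G s‖ := by
        apply intervalIntegral.integral_mono_on ht0
        · exact (hVc.inner hGc).intervalIntegrable _ _
        · exact (continuous_const.mul hGc.norm).intervalIntegrable _ _
        · intro s hs
          calc ⟪V s, G s⟫ ≤ ‖V s‖ * ‖G s‖ := real_inner_le_norm _ _
            _ ≤ runSup V t * ‖G s‖ :=
              mul_le_mul_of_nonneg_right (le_runSup V hVc hs) (norm_nonneg _)
      rw [intervalIntegral.integral_const_mul] at h1
      calc (∫ s in (0:ℝ)..t, ⟪V s, G s⟫) ≤ runSup V t * ∫ s in (0:ℝ)..t, ‖G s‖ := h1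
        _ ≤ runSup V t * M := mul_le_mul_of_nonneg_left (hG t ⟨ht0, htT⟩) hR0
        _ = M * runSup V t := mul_comm _ _
    have := hEq t ⟨ht0, htT⟩
    nlinarith
  intro t ht
  refine ⟨key t ht, fun hbig => ?_⟩
  obtain ⟨ht0, htT⟩ := ht
  -- maximizer of ‖V‖ on [0,t]
  obtain ⟨s₀, hs₀mem, hs₀max⟩ :=
    isCompact_Icc.exists_isMaxOn (Set.nonempty_Icc.2 ht0) (hVc.norm.continuousOn)
  have hRs : runSup V t = ‖V s₀‖ := by
    apply le_antisymm
    · exact csSup_le ⟨‖V 0‖, 0, ⟨le_rfl, ht0⟩, rfl⟩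
        (by rintro x ⟨s, hs, rfl⟩; exact hs₀max hs)
    · exact le_runSup V hVc hs₀mem
  have hs₀Icc : s₀ ∈ Set.Icc (0:ℝ) T := ⟨hs₀mem.1, hs₀mem.2.trans htT⟩
  have hkey := key s₀ hs₀Icc
  have hmono : runSup V s₀ ≤ runSup V t := runSup_mono V hVc hs₀mem.1 hs₀mem.2
  have hR0 : 0 ≤ runSup V t := runSup_nonneg V hVc ht0
  have hVt : ‖V t‖ ≤ runSup V t := le_runSup V hVc ⟨ht0, le_rfl⟩
  constructor
  · -- ‖v‖² ≥ Ṽ² - 2MṼ(s₀) ≥ Ṽ² - 2MṼ > Ṽ²/2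
    nlinarith [norm_nonneg (V t)]
  · nlinarith [norm_nonneg (V t)]
end

section
/- For constants C > 0, ν ∈ (0,2), ζ > 2ν, and λ > 0, with k = k(N) = ⌈N^ζ⌉, the quantity S_k' = C^k ∑_{j=0}^{k} binom(k,j) N^{ν(j+k)} t^{j+k} / (j+k)! satisfies S_k' ≤ (C')^{−N^ζ} for all sufficiently large N, uniformly for t in a bounded interval [0,T], where C' > 1. -/
open Real Filter Finset

private lemma choose_le_two_pow' (k j : ℕ) (hj : j ≤ k) : k.choose j ≤ 2 ^ k := by
  calc k.choose j ≤ ∑ m ∈ Finset.range (k + 1), k.choose m :=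
        Finset.single_le_sum (fun i _ => Nat.zero_le _) (Finset.mem_range.mpr (by omega))
    _ = 2 ^ k := Nat.sum_range_choose k

private lemma pow_le_exp_mul_fact (k : ℕ) :
    (k : ℝ) ^ k ≤ Real.exp 1 ^ k * (Nat.factorial k : ℝ) := by
  have h0 : (0:ℝ) < (Nat.factorial k : ℝ) := by exact_mod_cast Nat.factorial_pos k
  rw [Real.exp_one_pow, ← div_le_iff₀ h0]
  calc (k:ℝ) ^ k / (Nat.factorial k : ℝ)
      ≤ ∑ i ∈ Finset.range (k + 1), (k:ℝ) ^ i / (Nat.factorial i : ℝ) :=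
        Finset.single_le_sum (f := fun i => (k:ℝ) ^ i / (Nat.factorial i : ℝ))
          (fun i _ => by positivity) (Finset.mem_range.mpr (by omega))
    _ ≤ Real.exp k := Real.sum_le_exp_of_nonneg (by positivity) _

theorem stmt14 (C ν ζ T : ℝ) (hC : 0 < C) (hν : 0 < ν) (hν2 : ν < 2)
    (hζ : 2 * ν < ζ) (hT : 0 < T) :
    ∃ C' : ℝ, 1 < C' ∧ ∃ N₀ : ℕ, ∀ N : ℕ, N₀ ≤ N → ∀ t ∈ Set.Icc (0:ℝ) T,
      C ^ ⌈(N:ℝ) ^ ζ⌉₊ *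
        ∑ j ∈ Finset.range (⌈(N:ℝ) ^ ζ⌉₊ + 1),
          ((⌈(N:ℝ) ^ ζ⌉₊).choose j : ℝ) *
            (N:ℝ) ^ (ν * ((j:ℝ) + (⌈(N:ℝ) ^ ζ⌉₊ : ℝ))) *
            t ^ (j + ⌈(N:ℝ) ^ ζ⌉₊) / (Nat.factorial (j + ⌈(N:ℝ) ^ ζ⌉₊) : ℝ)
        ≤ C' ^ (-(N:ℝ) ^ ζ) := by
  refine ⟨2, one_lt_two, ?_⟩
  set M : ℝ := max 1 T with hM
  have hM1 : (1:ℝ) ≤ M := le_max_left _ _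
  have hζ0 : 0 < ζ := lt_trans (by positivity) hζ
  set δ : ℝ := 2 * ν / ζ with hδ
  have hδ0 : 0 < δ := by positivity
  have hδ1 : δ < 1 := (div_lt_one hζ0).mpr hζ
  set D : ℝ := 2 * C * M ^ 2 * Real.exp 1 with hD
  have hD0 : 0 < D := by positivity
  -- eventually D * k^(δ-1) ≤ 1/4
  have htend : Tendsto (fun k : ℕ => D * (k:ℝ) ^ (δ - 1)) atTop (nhds 0) := by
    have h1 : Tendsto (fun x : ℝ => x ^ (-(1 - δ))) atTop (nhds 0) :=
      tendsto_rpow_neg_atTop (by linarith)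
    have h2 := (h1.comp (tendsto_natCast_atTop_atTop (R := ℝ))).const_mul D
    simpa [Function.comp, neg_sub, mul_comm] using h2
  have hev : ∀ᶠ k : ℕ in atTop, D * (k:ℝ) ^ (δ - 1) ≤ 1/4 := by
    exact htend.eventually_le_const (by norm_num : (0:ℝ) < 1/4)
  obtain ⟨k₀, hk₀⟩ := eventually_atTop.mp hev
  -- eventually k(N) ≥ max k₀ 1 and N ≥ 1
  have htendN : Tendsto (fun N : ℕ => ((N:ℝ)) ^ ζ) atTop atTop :=
    (tendsto_rpow_atTop hζ0).comp tendsto_natCast_atTop_atTop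
  obtain ⟨N₁, hN₁⟩ := eventually_atTop.mp (htendN.eventually_ge_atTop (max k₀ 1 : ℕ))
  refine ⟨max N₁ 1, fun N hN t ht => ?_⟩
  have hN1 : (1:ℕ) ≤ N := le_trans (le_max_right _ _) hN
  have hN1R : (1:ℝ) ≤ (N:ℝ) := by exact_mod_cast hN1
  set k : ℕ := ⌈(N:ℝ) ^ ζ⌉₊ with hk
  have hNζ : (0:ℝ) ≤ (N:ℝ) ^ ζ := by positivity
  have hNk : (N:ℝ) ^ ζ ≤ (k:ℝ) := Nat.le_ceil _
  have hkbig : (max k₀ 1 : ℕ) ≤ k := by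
    have := hN₁ N (le_trans (le_max_left _ _) hN)
    exact_mod_cast le_trans this hNk
  have hk1 : 1 ≤ k := le_trans (le_max_right _ _) hkbig
  have hkR : (0:ℝ) < (k:ℝ) := by exact_mod_cast hk1
  have hDk : D * (k:ℝ) ^ (δ - 1) ≤ 1/4 := hk₀ k (le_trans (le_max_left _ _) hkbig)
  obtain ⟨ht0, htT⟩ := ht
  have htM : t ≤ M := le_trans htT (le_max_right _ _)
  have hkfac : (0:ℝ) < (Nat.factorial k : ℝ) := by exact_mod_cast Nat.factorial_pos k
  -- termwise bound
  set B : ℝ := (2:ℝ) ^ k * ((N:ℝ) ^ (2 * ν)) ^ k * (M ^ 2) ^ k / (Nat.factorial k : ℝ) with hB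
  have hterm : ∀ j ∈ Finset.range (k + 1),
      (k.choose j : ℝ) * (N:ℝ) ^ (ν * ((j:ℝ) + (k:ℝ))) * t ^ (j + k)
        / (Nat.factorial (j + k) : ℝ) ≤ B := by
    intro j hj
    rw [hB]
    have hjk : j ≤ k := Nat.lt_succ_iff.mp (Finset.mem_range.mp hj)
    have h1 : (k.choose j : ℝ) ≤ (2:ℝ) ^ k := by
      exact_mod_cast choose_le_two_pow' k j hjk
    have h2 : (N:ℝ) ^ (ν * ((j:ℝ) + (k:ℝ))) ≤ ((N:ℝ) ^ (2 * ν)) ^ k := by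
      have e1 : ((N:ℝ) ^ (2 * ν)) ^ k = (N:ℝ) ^ (2 * ν * (k:ℝ)) := by
        rw [← Real.rpow_natCast ((N:ℝ) ^ (2*ν)) k, ← Real.rpow_mul (by positivity)]
      rw [e1]
      apply Real.rpow_le_rpow_of_exponent_le hN1R
      have : (j:ℝ) ≤ (k:ℝ) := by exact_mod_cast hjk
      nlinarith
    have h3 : t ^ (j + k) ≤ (M ^ 2) ^ k := by
      calc t ^ (j + k) ≤ M ^ (j + k) := pow_le_pow_left₀ ht0 htM _
        _ ≤ M ^ (2 * k) := pow_le_pow_right₀ hM1 (by omega)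
        _ = (M ^ 2) ^ k := by rw [pow_mul]
    have h4 : (Nat.factorial k : ℝ) ≤ (Nat.factorial (j + k) : ℝ) := by
      exact_mod_cast Nat.factorial_le (by omega)
    apply div_le_div₀ (by positivity) ?_ hkfac h4
    have hr : (0:ℝ) ≤ (N:ℝ) ^ (ν * ((j:ℝ) + (k:ℝ))) := by positivity
    exact mul_le_mul (mul_le_mul h1 h2 hr (by positivity)) h3 (by positivity)
      (by positivity)
  have hsum : ∑ j ∈ Finset.range (k + 1),
      (k.choose j : ℝ) * (N:ℝ) ^ (ν * ((j:ℝ) + (k:ℝ))) * t ^ (j + k)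
        / (Nat.factorial (j + k) : ℝ) ≤ (k + 1 : ℝ) * B := by
    refine le_trans (Finset.sum_le_card_nsmul _ _ B hterm) (le_of_eq ?_)
    rw [Finset.card_range, nsmul_eq_mul]
    push_cast
    ring
  -- main estimate
  have hNδ : (N:ℝ) ^ (2 * ν) ≤ (k:ℝ) ^ δ := by
    have e1 : (N:ℝ) ^ (2 * ν) = ((N:ℝ) ^ ζ) ^ δ := by
      rw [← Real.rpow_mul (by positivity)]
      congr 1
      field_simp [hδ]
      rw [hδ, mul_div_assoc', mul_div_cancel_left₀ _ hζ0.ne']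
    rw [e1]
    exact Real.rpow_le_rpow hNζ hNk hδ0.le
  have hfac : (k:ℝ) ^ k ≤ Real.exp 1 ^ k * (Nat.factorial k : ℝ) := pow_le_exp_mul_fact k
  have key : C ^ k * ((k + 1 : ℝ) * B) ≤ (1/2 : ℝ) ^ k := by
    have hstep1 : C ^ k * ((k + 1 : ℝ) * B) =
        (k + 1 : ℝ) * ((2 * C * (N:ℝ) ^ (2*ν) * M ^ 2) ^ k / (Nat.factorial k : ℝ)) := by
      have hF : (Nat.factorial k : ℝ) ≠ 0 := hkfac.ne'
      rw [hB]
      field_simp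
      ring
    rw [hstep1]
    have hstep2 : (2 * C * (N:ℝ) ^ (2*ν) * M ^ 2) ^ k / (Nat.factorial k : ℝ)
        ≤ (D * (k:ℝ) ^ (δ - 1)) ^ k := by
      have hbase : 2 * C * (N:ℝ) ^ (2*ν) * M ^ 2 ≤ 2 * C * (k:ℝ) ^ δ * M ^ 2 := by
        gcongr
      have hx : (2 * C * (N:ℝ) ^ (2*ν) * M ^ 2) ^ k ≤ (2 * C * (k:ℝ) ^ δ * M ^ 2) ^ k :=
        pow_le_pow_left₀ (by positivity) hbase k
      have hy : (D * (k:ℝ) ^ (δ - 1)) ^ k = (2 * C * (k:ℝ) ^ δ * M ^ 2) ^ k * Real.exp 1 ^ k / (k:ℝ) ^ k := by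
        rw [← mul_pow, ← div_pow]
        congr 1
        rw [hD]
        rw [Real.rpow_sub hkR, Real.rpow_one]
        field_simp
      rw [hy, div_le_div_iff₀ hkfac (by positivity)]
      calc (2 * C * (N:ℝ) ^ (2*ν) * M ^ 2) ^ k * (k:ℝ) ^ k
          ≤ (2 * C * (k:ℝ) ^ δ * M ^ 2) ^ k * (Real.exp 1 ^ k * (Nat.factorial k : ℝ)) :=
            mul_le_mul hx hfac (by positivity) (by positivity)
        _ = (2 * C * (k:ℝ) ^ δ * M ^ 2) ^ k * Real.exp 1 ^ k * (Nat.factorial k : ℝ) := by ring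
    calc (k + 1 : ℝ) * ((2 * C * (N:ℝ) ^ (2*ν) * M ^ 2) ^ k / (Nat.factorial k : ℝ))
        ≤ (k + 1 : ℝ) * (D * (k:ℝ) ^ (δ - 1)) ^ k := by
          apply mul_le_mul_of_nonneg_left hstep2 (by positivity)
      _ ≤ (2:ℝ) ^ k * (1/4 : ℝ) ^ k := by
          apply mul_le_mul ?_ (pow_le_pow_left₀ (by positivity) hDk k) (by positivity)
            (by positivity)
          calc (k + 1 : ℝ) = ((k + 1 : ℕ) : ℝ) := by push_cast; ring
            _ ≤ ((2 ^ k : ℕ) : ℝ) := by exact_mod_cast Nat.succ_le_of_lt (Nat.lt_two_pow_self)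
            _ = (2:ℝ) ^ k := by push_cast; ring
      _ = (1/2 : ℝ) ^ k := by rw [← mul_pow]; norm_num
  have hfinal : (1/2 : ℝ) ^ k ≤ (2:ℝ) ^ (-(N:ℝ) ^ ζ) := by
    have e1 : (1/2 : ℝ) ^ k = (2:ℝ) ^ (-(k:ℝ)) := by
      rw [Real.rpow_neg (by norm_num), Real.rpow_natCast]
      simp [one_div, inv_pow]
    rw [e1]
    exact Real.rpow_le_rpow_of_exponent_le one_le_two (by linarith)
  calc C ^ k * ∑ j ∈ Finset.range (k + 1),
        (k.choose j : ℝ) * (N:ℝ) ^ (ν * ((j:ℝ) + (k:ℝ))) * t ^ (j + k)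
          / (Nat.factorial (j + k) : ℝ)
      ≤ C ^ k * ((k + 1 : ℝ) * B) := by
        apply mul_le_mul_of_nonneg_left hsum (by positivity)
    _ ≤ (1/2 : ℝ) ^ k := key
    _ ≤ (2:ℝ) ^ (-(N:ℝ) ^ ζ) := hfinal
end

section
/- Suppose a nonnegative function σ : [0,T] → ℝ satisfies σ(t) ≤ A ∫₀ᵗ∫₀^{t₁} σ(t₂) dt₂ dt₁ + B ∫₀ᵗ σ(t₁) dt₁ + D for constants A, B, D ≥ 0, and σ is bounded by M on [0,T]. Then for every integer k ≥ 1, σ(t) ≤ D ∑_{i=0}^{k−1} ∑_{j=0}^{i} binom(i,j) A^j B^{i−j} t^{i+j}/(i+j)! + M ∑_{j=0}^{k} binom(k,j) A^j B^{k−j} t^{k+j}/(k+j)!. -/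
open intervalIntegral Finset MeasureTheory

noncomputable def ee (n : ℕ) (t : ℝ) : ℝ := t ^ n / n.factorial

lemma ee_cont (n : ℕ) : Continuous (ee n) := by
  unfold ee; fun_prop

lemma ee_intg (n : ℕ) (t : ℝ) : ∫ s in (0:ℝ)..t, ee n s = ee (n+1) t := by
  simp only [ee]
  rw [intervalIntegral.integral_div, integral_pow]
  have h1 : ((n:ℝ)+1) ≠ 0 := by positivity
  have h2 : ((n.factorial : ℝ)) ≠ 0 := by positivity
  rw [Nat.factorial_succ]
  push_cast
  field_simp
  rw [zero_pow (Nat.succ_ne_zero n), sub_zero]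

noncomputable def QQs (A B : ℝ) (n m : ℕ) (t : ℝ) : ℝ :=
  ∑ j ∈ Finset.range (n+1), (n.choose j : ℝ) * A^j * B^(n-j) * ee (n+j+m) t

lemma QQs_cont (A B : ℝ) (n m : ℕ) : Continuous (QQs A B n m) := by
  unfold QQs
  exact continuous_finset_sum _ fun j _ => continuous_const.mul (ee_cont _)

lemma QQs_intg (A B : ℝ) (n m : ℕ) (t : ℝ) :
    ∫ s in (0:ℝ)..t, QQs A B n m s = QQs A B n (m+1) t := by
  unfold QQs
  rw [intervalIntegral.integral_finset_sum]
  · refine Finset.sum_congr rfl fun j _ => ?_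
    rw [intervalIntegral.integral_const_mul, ee_intg]
    ring_nf
  · intro j _
    exact (continuous_const.mul (ee_cont _)).intervalIntegrable _ _

lemma pascal (A B : ℝ) (n : ℕ) (t : ℝ) :
    A * QQs A B n 2 t + B * QQs A B n 1 t = QQs A B (n+1) 0 t := by
  unfold QQs
  rw [Finset.mul_sum, Finset.mul_sum]
  rw [Finset.sum_range_succ' (fun j => ((n+1).choose j : ℝ) * A^j * B^(n+1-j) * ee (n+1+j+0) t)]
  have e1 : ∀ j ∈ Finset.range (n+1),
      ((n+1).choose (j+1) : ℝ) * A^(j+1) * B^(n+1-(j+1)) * ee (n+1+(j+1)+0) t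
      = (n.choose j : ℝ) * A^(j+1) * B^(n-j) * ee (n+j+2) t
        + (n.choose (j+1) : ℝ) * A^(j+1) * B^(n-j) * ee (n+j+2) t := by
    intro j hj
    have : (n+1).choose (j+1) = n.choose j + n.choose (j+1) := Nat.choose_succ_succ n j
    rw [this]
    have h1 : n + 1 - (j+1) = n - j := by omega
    have h2 : n + 1 + (j+1) + 0 = n + j + 2 := by omega
    rw [h1, h2]
    push_cast
    ring
  rw [Finset.sum_congr rfl e1, Finset.sum_add_distrib]
  have e2 : ∑ j ∈ Finset.range (n+1), (n.choose (j+1) : ℝ) * A^(j+1) * B^(n-j) * ee (n+j+2) t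
      + ((n+1).choose 0 : ℝ) * A^0 * B^(n+1-0) * ee (n+1+0+0) t
      = ∑ j ∈ Finset.range (n+1), B * ((n.choose j : ℝ) * A^j * B^(n-j) * ee (n+j+1) t) := by
    rw [Finset.sum_range_succ' (fun j => B * ((n.choose j : ℝ) * A^j * B^(n-j) * ee (n+j+1) t))]
    rw [Finset.sum_range_succ]
    simp only [Nat.choose_succ_self, Nat.cast_zero, zero_mul, mul_zero, add_zero]
    congr 1
    · refine Finset.sum_congr rfl fun j hj => ?_
      simp only [Finset.mem_range] at hj
      have h1 : n - (j+1) + 1 = n - j := by omega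
      have h2 : n + (j+1) + 1 = n + j + 2 := by omega
      rw [← h1, ← h2]
      ring
    · simp only [Nat.choose_zero_right, Nat.cast_one, pow_zero, Nat.sub_zero]
      have : n + 1 + 0 + 0 = n + 0 + 1 := by omega
      rw [this]
      ring
  rw [← e2]
  have e3 : (∑ j ∈ Finset.range (n+1), A * ((n.choose j : ℝ) * A^j * B^(n-j) * ee (n+j+2) t))
      = ∑ j ∈ Finset.range (n+1), (n.choose j : ℝ) * A^(j+1) * B^(n-j) * ee (n+j+2) t :=
    Finset.sum_congr rfl fun j _ => by ring
  rw [e3]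
  ring

lemma QQs_zero (A B : ℝ) (t : ℝ) : QQs A B 0 0 t = 1 := by
  simp [QQs, ee]

theorem stmt16 (T A B D M : ℝ) (σ : ℝ → ℝ) (hT : 0 ≤ T)
    (hA : 0 ≤ A) (hB : 0 ≤ B) (hD : 0 ≤ D)
    (hσc : ContinuousOn σ (Set.Icc 0 T))
    (hσ0 : ∀ t ∈ Set.Icc (0:ℝ) T, 0 ≤ σ t)
    (hσM : ∀ t ∈ Set.Icc (0:ℝ) T, σ t ≤ M)
    (hineq : ∀ t ∈ Set.Icc (0:ℝ) T,
      σ t ≤ A * (∫ t₁ in (0:ℝ)..t, ∫ t₂ in (0:ℝ)..t₁, σ t₂)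
            + B * (∫ t₁ in (0:ℝ)..t, σ t₁) + D) :
    ∀ k : ℕ, 1 ≤ k → ∀ t ∈ Set.Icc (0:ℝ) T,
      σ t ≤ D * ∑ i ∈ Finset.range k, ∑ j ∈ Finset.range (i + 1),
              (i.choose j : ℝ) * A ^ j * B ^ (i - j) * t ^ (i + j) /
                (Nat.factorial (i + j) : ℝ)
        + M * ∑ j ∈ Finset.range (k + 1),
              (k.choose j : ℝ) * A ^ j * B ^ (k - j) * t ^ (k + j) /
                (Nat.factorial (k + j) : ℝ) := by
  -- Key claim by induction on k (starting at 0)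
  have key : ∀ k : ℕ, ∀ t ∈ Set.Icc (0:ℝ) T,
      σ t ≤ D * ∑ i ∈ Finset.range k, QQs A B i 0 t + M * QQs A B k 0 t := by
    intro k
    induction k with
    | zero =>
      intro t ht
      simpa [QQs_zero] using hσM t ht
    | succ k IH =>
      intro t ht
      set P : ℝ → ℝ := fun s => D * ∑ i ∈ Finset.range k, QQs A B i 0 s + M * QQs A B k 0 s
        with hP
      have hPcont : Continuous P := by
        apply Continuous.add
        · exact continuous_const.mul (continuous_finset_sum _ fun i _ => QQs_cont A B i 0)
        · exact continuous_const.mul (QQs_cont A B k 0)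
      -- σ interval integrable on [0,s] for s ∈ [0,T]
      have hσint : ∀ s ∈ Set.Icc (0:ℝ) T, IntervalIntegrable σ volume 0 s := by
        intro s hs
        apply ContinuousOn.intervalIntegrable
        rw [Set.uIcc_of_le hs.1]
        exact hσc.mono (Set.Icc_subset_Icc le_rfl hs.2)
      -- inner integral bound
      have inner : ∀ s ∈ Set.Icc (0:ℝ) T,
          (∫ u in (0:ℝ)..s, σ u) ≤ ∫ u in (0:ℝ)..s, P u := by
        intro s hs
        apply intervalIntegral.integral_mono_on hs.1 (hσint s hs)
          (hPcont.intervalIntegrable _ _)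
        intro u hu
        exact IH u ⟨hu.1, hu.2.trans hs.2⟩
      -- single integral bound
      have h1 : (∫ u in (0:ℝ)..t, σ u) ≤ ∫ u in (0:ℝ)..t, P u := inner t ht
      -- primitive of σ is interval integrable on [0,t]
      have hprim : IntervalIntegrable (fun s => ∫ u in (0:ℝ)..s, σ u) volume 0 t := by
        apply ContinuousOn.intervalIntegrable
        apply intervalIntegral.continuousOn_primitive_interval
        rw [Set.uIcc_of_le ht.1]
        exact (hσc.mono (Set.Icc_subset_Icc le_rfl ht.2)).integrableOn_Icc
      have hprimP : IntervalIntegrable (fun s => ∫ u in (0:ℝ)..s, P u) volume 0 t := by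
        apply ContinuousOn.intervalIntegrable
        apply intervalIntegral.continuousOn_primitive_interval
        exact hPcont.continuousOn.integrableOn_Icc.mono_set Set.Icc_subset_uIcc
      -- double integral bound
      have h2 : (∫ s in (0:ℝ)..t, ∫ u in (0:ℝ)..s, σ u)
          ≤ ∫ s in (0:ℝ)..t, ∫ u in (0:ℝ)..s, P u := by
        apply intervalIntegral.integral_mono_on ht.1 hprim hprimP
        intro s hs
        exact inner s ⟨hs.1, hs.2.trans ht.2⟩
      -- compute ∫ P
      have hPint : ∀ s : ℝ, (∫ u in (0:ℝ)..s, P u)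
          = D * ∑ i ∈ Finset.range k, QQs A B i 1 s + M * QQs A B k 1 s := by
        intro s
        rw [hP]
        simp only
        rw [intervalIntegral.integral_add, intervalIntegral.integral_const_mul,
          intervalIntegral.integral_const_mul, intervalIntegral.integral_finset_sum,
          QQs_intg]
        · congr 1
          congr 1
          exact Finset.sum_congr rfl fun i _ => QQs_intg A B i 0 s
        · intro i _
          exact (QQs_cont A B i 0).intervalIntegrable _ _
        · exact (continuous_const.mul (continuous_finset_sum _ fun i _ =>
            QQs_cont A B i 0)).intervalIntegrable _ _
        · exact (continuous_const.mul (QQs_cont A B k 0)).intervalIntegrable _ _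
      -- compute double integral of P
      have hPint2 : (∫ s in (0:ℝ)..t, ∫ u in (0:ℝ)..s, P u)
          = D * ∑ i ∈ Finset.range k, QQs A B i 2 t + M * QQs A B k 2 t := by
        rw [intervalIntegral.integral_congr (g := fun s =>
          D * ∑ i ∈ Finset.range k, QQs A B i 1 s + M * QQs A B k 1 s)
          (fun s _ => hPint s)]
        rw [intervalIntegral.integral_add, intervalIntegral.integral_const_mul,
          intervalIntegral.integral_const_mul, intervalIntegral.integral_finset_sum,
          QQs_intg]
        · congr 1
          congr 1
          exact Finset.sum_congr rfl fun i _ => QQs_intg A B i 1 t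
        · intro i _
          exact (QQs_cont A B i 1).intervalIntegrable _ _
        · exact (continuous_const.mul (continuous_finset_sum _ fun i _ =>
            QQs_cont A B i 1)).intervalIntegrable _ _
        · exact (continuous_const.mul (QQs_cont A B k 1)).intervalIntegrable _ _
      calc σ t ≤ A * (∫ t₁ in (0:ℝ)..t, ∫ t₂ in (0:ℝ)..t₁, σ t₂)
            + B * (∫ t₁ in (0:ℝ)..t, σ t₁) + D := hineq t ht
        _ ≤ A * (∫ s in (0:ℝ)..t, ∫ u in (0:ℝ)..s, P u)
            + B * (∫ u in (0:ℝ)..t, P u) + D := by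
            gcongr
        _ = D * ∑ i ∈ Finset.range (k+1), QQs A B i 0 t + M * QQs A B (k+1) 0 t := by
            rw [hPint2, hPint t]
            rw [Finset.sum_range_succ' (fun i => QQs A B i 0 t), QQs_zero]
            have hsum : ∑ i ∈ Finset.range k, QQs A B (i+1) 0 t
                = ∑ i ∈ Finset.range k, (A * QQs A B i 2 t + B * QQs A B i 1 t) :=
              Finset.sum_congr rfl fun i _ => (pascal A B i t).symm
            rw [hsum, ← pascal A B k t]
            rw [Finset.sum_add_distrib, ← Finset.mul_sum, ← Finset.mul_sum]
            ring
  intro k hk t ht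
  have := key k t ht
  have e1 : ∀ i : ℕ, QQs A B i 0 t = ∑ j ∈ Finset.range (i + 1),
      (i.choose j : ℝ) * A ^ j * B ^ (i - j) * t ^ (i + j) / (Nat.factorial (i + j) : ℝ) := by
    intro i
    unfold QQs ee
    exact Finset.sum_congr rfl fun j _ => by rw [Nat.add_zero]; ring
  calc σ t ≤ D * ∑ i ∈ Finset.range k, QQs A B i 0 t + M * QQs A B k 0 t := this
    _ = _ := by rw [e1 k]; congr 2; exact Finset.sum_congr rfl fun i _ => e1 i
end
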